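/- Every nonzero harmonic binary d-form has only real roots; that is, if f is a nonzero homogeneous polynomial of degree d in ℝ[x,y] with Δ ∘ f = 0, then f factors over ℝ as a product of a nonzero constant and d real linear forms. -/

import Mathlib

open MvPolynomial Finset

/-- The Laplacian `∂x² + ∂y²` applied to a binary polynomial. -/
noncomputable def lap (f : MvPolynomial (Fin 2) ℝ) : MvPolynomial (Fin 2) ℝ :=
  pderiv 0 (pderiv 0 f) + pderiv 1 (pderiv 1 f)

/-- Apply the constant-coefficient differential operator encoded by the polynomial
`g ∈ ℝ[∂x,∂y]` (with `∂x = X 0`, `∂y = X 1`) to the polynomial `f`. -/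
noncomputable def diffOp (g f : MvPolynomial (Fin 2) ℝ) : MvPolynomial (Fin 2) ℝ :=
  (AddMonoidAlgebra.coeff g).sum fun m c =>
    c • ((fun p => pderiv (0 : Fin 2) p)^[m 0] ((fun p => pderiv (1 : Fin 2) p)^[m 1] f))

/-- The harmonic form `h_{d,0} = Σ_j (−1)^j C(d,2j) x^(d−2j) y^(2j)`. -/
noncomputable def h0 (d : ℕ) : MvPolynomial (Fin 2) ℝ :=
  ∑ j ∈ Finset.range (d / 2 + 1),
    C ((-1 : ℝ) ^ j * (d.choose (2 * j) : ℝ)) * X 0 ^ (d - 2 * j) * X 1 ^ (2 * j)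

/-- The harmonic form `h_{d,1} = Σ_j (−1)^j C(d,2j+1) x^(d−2j−1) y^(2j+1)`. -/
noncomputable def h1 (d : ℕ) : MvPolynomial (Fin 2) ℝ :=
  ∑ j ∈ Finset.range ((d - 1) / 2 + 1),
    C ((-1 : ℝ) ^ j * (d.choose (2 * j + 1) : ℝ)) * X 0 ^ (d - (2 * j + 1)) * X 1 ^ (2 * j + 1)

/-- `f` is a sum of `r` real multiples of `d`-th powers of real linear forms. -/
def IsWaringDecomp (d r : ℕ) (f : MvPolynomial (Fin 2) ℝ) : Prop :=
  ∃ (lam a b : Fin r → ℝ), f = ∑ i, lam i • (C (a i) * X 0 + C (b i) * X 1) ^ d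

/-- The (real) Waring rank of `f` as a binary `d`-form: the smallest positive `r`
admitting a Waring decomposition of length `r`. -/
noncomputable def waringRank (d : ℕ) (f : MvPolynomial (Fin 2) ℝ) : ℕ :=
  sInf {r : ℕ | 0 < r ∧ IsWaringDecomp d r f}

open Complex Real

/-! ### Auxiliary lemmas -/

lemma deg2 (m : Fin 2 →₀ ℕ) : Finsupp.degree m = m 0 + m 1 := by
  rw [Finsupp.degree_apply,
    Finset.sum_subset (Finset.subset_univ m.support)
      (by intro x _ hx; simpa using Finsupp.notMem_support_iff.mp hx)]
  simp [Fin.sum_univ_two]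

lemma rep2 (m : Fin 2 →₀ ℕ) : m = Finsupp.single 0 (m 0) + Finsupp.single 1 (m 1) := by
  ext j; fin_cases j <;> simp [Finsupp.single_apply]

lemma weight_one_eq_deg (m : Fin 2 →₀ ℕ) :
    (Finsupp.weight (1 : Fin 2 → ℕ)) m = Finsupp.degree m := by
  rw [Finsupp.degree_eq_weight_one]
  rfl

lemma eval_one_zero {R : Type*} [CommSemiring R] (d : ℕ) (p : MvPolynomial (Fin 2) R)
    (hp : p.IsHomogeneous d) :
    eval (![1, 0] : Fin 2 → R) p = coeff (Finsupp.single 0 d) p := by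
  rw [MvPolynomial.eval_eq]
  rw [Finset.sum_eq_single (Finsupp.single 0 d)]
  · by_cases hd0 : d = 0
    · subst hd0; simp
    · rw [Finsupp.support_single_ne_zero _ hd0]
      simp
  · intro m hm hne
    by_cases hm1 : m 1 = 0
    · have : coeff m p = 0 := by
        apply hp.coeff_eq_zero
        intro hdm
        apply hne
        rw [deg2, hm1, add_zero] at hdm
        rw [rep2 m, hm1, hdm]
        simp
      rw [this, zero_mul]
    · rw [Finset.prod_eq_zero (Finsupp.mem_support_iff.mpr hm1), mul_zero]
      simp [zero_pow hm1]
  · intro h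
    rw [MvPolynomial.notMem_support_iff.mp h, zero_mul]

lemma coeff_pderiv {R : Type*} [CommSemiring R] {σ : Type*} [DecidableEq σ]
    (i : σ) (m : σ →₀ ℕ) (p : MvPolynomial σ R) :
    coeff m (pderiv i p) = (m i + 1) * coeff (m + Finsupp.single i 1) p := by
  induction p using MvPolynomial.induction_on' with
  | monomial s a =>
    rw [pderiv_monomial, coeff_monomial, coeff_monomial]
    by_cases h : s = m + Finsupp.single i 1
    · subst h
      rw [if_pos (add_tsub_cancel_right _ _), if_pos rfl]
      simp [Finsupp.add_apply, Finsupp.single_apply]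
      ring
    · rw [if_neg h, mul_zero]
      by_cases h2 : s - Finsupp.single i 1 = m
      · have hsi : s i = 0 := by
          by_contra hsi
          apply h
          ext j
          by_cases hj : j = i
          · subst hj
            have := congrArg (fun f => f j) h2
            simp [Finsupp.tsub_apply, Finsupp.single_apply] at this ⊢
            omega
          · have := congrArg (fun f => f j) h2
            simp [Finsupp.tsub_apply, Finsupp.single_apply, hj, Ne.symm hj] at this ⊢
            omega
        rw [if_pos h2, hsi]
        simp
      · rw [if_neg h2]
  | add p q hp hq =>
    simp [coeff_add, hp, hq, mul_add]

lemma isHomog_pderiv {R : Type*} [CommSemiring R] {p : MvPolynomial (Fin 2) R} {d : ℕ}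
    (hp : p.IsHomogeneous d) (i : Fin 2) : (pderiv i p).IsHomogeneous (d - 1) := by
  intro m hm
  rw [_root_.coeff_pderiv] at hm
  have h2 : coeff (m + Finsupp.single i 1) p ≠ 0 := by
    intro h; rw [h, mul_zero] at hm; exact hm rfl
  have h3 := hp h2
  rw [weight_one_eq_deg] at h3 ⊢
  rw [deg2] at h3 ⊢
  simp only [Finsupp.add_apply, Finsupp.single_apply] at h3
  fin_cases i <;> simp at h3 <;> omega

lemma lemA (d : ℕ) (g : MvPolynomial (Fin 2) ℝ) (hg : g.IsHomogeneous d) (hh : lap g = 0)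
    (hc0 : coeff (Finsupp.single 0 d) g = 0)
    (hc1 : coeff (Finsupp.single 0 (d - 1) + Finsupp.single 1 1) g = 0) : g = 0 := by
  have key : ∀ k, k ≤ d → coeff (Finsupp.single 0 (d - k) + Finsupp.single 1 k) g = 0 := by
    intro k
    induction k using Nat.strong_induction_on with
    | _ k ih =>
      intro hk
      match k with
      | 0 => simpa using hc0
      | 1 => exact hc1
      | (k + 2) =>
        have e1 : coeff (Finsupp.single 0 (d - k) + Finsupp.single 1 k) g = 0 :=
          ih k (by omega) (by omega)
        have e2 := congrArg (coeff (Finsupp.single 0 (d - (k + 2)) + Finsupp.single 1 k)) hh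
        rw [lap, coeff_add, _root_.coeff_pderiv, _root_.coeff_pderiv, _root_.coeff_pderiv, _root_.coeff_pderiv] at e2
        have m0eq : ((Finsupp.single (0 : Fin 2) (d - (k + 2)) + Finsupp.single 1 k)
            + Finsupp.single 0 1) + Finsupp.single 0 1
            = Finsupp.single 0 (d - k) + Finsupp.single 1 k := by
          ext j; fin_cases j <;> simp [Finsupp.single_apply] <;> omega
        have m1eq : ((Finsupp.single (0 : Fin 2) (d - (k + 2)) + Finsupp.single 1 k)
            + Finsupp.single 1 1) + Finsupp.single 1 1
            = Finsupp.single 0 (d - (k + 2)) + Finsupp.single 1 (k + 2) := by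
          ext j; fin_cases j <;> simp [Finsupp.single_apply]
        have a1 : ((Finsupp.single (0 : Fin 2) (d - (k + 2)) + Finsupp.single 1 k)
            : Fin 2 →₀ ℕ) 1 = k := by simp
        have a2 : (((Finsupp.single (0 : Fin 2) (d - (k + 2)) + Finsupp.single 1 k)
            + Finsupp.single 1 1) : Fin 2 →₀ ℕ) 1 = k + 1 := by simp
        rw [m0eq, m1eq, e1, a1, a2] at e2
        simp only [mul_zero, zero_add, coeff_zero] at e2
        have h3 : ((k : ℝ) + 1) * (((k : ℝ) + 1 + 1) *
            coeff (Finsupp.single 0 (d - (k + 2)) + Finsupp.single 1 (k + 2)) g) = 0 := by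
          push_cast at e2 ⊢
          linarith [e2]
        rcases mul_eq_zero.mp h3 with h4 | h4
        · exact absurd h4 (by positivity)
        rcases mul_eq_zero.mp h4 with h5 | h5
        · exact absurd h5 (by positivity)
        exact h5
  ext m
  by_cases hm : (m 0) + (m 1) = d
  · have hm1 : m 1 ≤ d := by omega
    have hm0 : m 0 = d - m 1 := by omega
    have := key (m 1) hm1
    rw [rep2 m, hm0]
    simpa using this
  · rw [coeff_zero]
    apply hg.coeff_eq_zero
    intro h
    apply hm
    rw [← h, deg2]

lemma fac (θ : ℝ) (x y : ℂ) :
    (x + I * y) - Complex.exp (((2 * θ : ℝ)) * I) * (x - I * y)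
      = (2 * I * Complex.exp ((θ : ℝ) * I)) *
        (↑(-Real.sin θ) * x + ↑(Real.cos θ) * y) := by
  have hsc : Complex.sin θ ^ 2 + Complex.cos θ ^ 2 = 1 := Complex.sin_sq_add_cos_sq _
  push_cast
  rw [Complex.exp_mul_I, Complex.exp_mul_I, Complex.cos_two_mul, Complex.sin_two_mul]
  linear_combination (-2*x) * hsc + (2*(Complex.sin θ)^2*x) * Complex.I_sq

lemma scalar_key (A : ℂ) (d : ℕ) (hd : 0 < d) (x y : ℂ) :
    A * (x + I * y) ^ d + (starRingEnd ℂ) A * (x - I * y) ^ d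
      = ↑((-2 : ℝ) ^ d * ‖A‖) *
        ∏ k ∈ Finset.range d,
          (↑(-Real.sin ((π - 2 * Complex.arg A + 2 * π * k) / (2 * d))) * x
            + ↑(Real.cos ((π - 2 * Complex.arg A + 2 * π * k) / (2 * d))) * y) := by
  set ψ := Complex.arg A with hψ
  set r := ‖A‖ with hr
  set θ : ℕ → ℝ := fun k => (π - 2 * ψ + 2 * π * k) / (2 * d) with hθ
  set u := x + I * y with hu
  set v := x - I * y with hv
  have hdC : (d : ℂ) ≠ 0 := Nat.cast_ne_zero.mpr hd.ne'
  have hdR : (d : ℝ) ≠ 0 := Nat.cast_ne_zero.mpr hd.ne'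
  set α : ℂ := Complex.exp (((π - 2 * ψ) / d : ℝ) * I) with hα
  set ζ : ℂ := Complex.exp (2 * π * I / d) with hζdef
  have hζk : ∀ k : ℕ, ζ ^ k * α = Complex.exp (((2 * θ k : ℝ)) * I) := by
    intro k
    rw [hζdef, ← Complex.exp_nat_mul, ← Complex.exp_add]
    congr 1
    have h2θ : (2 * θ k : ℝ) = 2 * π * k / d + (π - 2 * ψ) / d := by
      rw [hθ]; field_simp; ring
    rw [h2θ]
    push_cast
    ring
  have hαd : α ^ d = -Complex.exp (((-2 * ψ : ℝ)) * I) := by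
    rw [hα, ← Complex.exp_nat_mul]
    have : (d : ℂ) * (((π - 2 * ψ) / d : ℝ) * I) = (π : ℂ) * I + ((-2 * ψ : ℝ)) * I := by
      push_cast; field_simp; ring
    rw [this, Complex.exp_add, Complex.exp_pi_mul_I]
    ring
  have hprod : u ^ d - α ^ d * v ^ d = ∏ k ∈ Finset.range d, (u - ζ ^ k * α * v) := by
    by_cases hv0 : v = 0
    · simp [hv0, zero_pow hd.ne', Finset.prod_const, Finset.card_range]
    · have hζp : IsPrimitiveRoot ζ d := Complex.isPrimitiveRoot_exp d hd.ne'
      have P := X_pow_sub_C_eq_prod hζp hd (rfl : α ^ d = α ^ d)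
      have h1 := congrArg (Polynomial.eval (u / v)) P
      simp only [Polynomial.eval_sub, Polynomial.eval_pow, Polynomial.eval_X,
        Polynomial.eval_C, Polynomial.eval_prod] at h1
      have hvd : v ^ d = ∏ _k ∈ Finset.range d, v := by
        simp [Finset.prod_const, Finset.card_range]
      calc u ^ d - α ^ d * v ^ d = ((u / v) ^ d - α ^ d) * v ^ d := by
            rw [div_pow, sub_mul, div_mul_cancel₀ _ (pow_ne_zero _ hv0)]
          _ = (∏ k ∈ Finset.range d, (u / v - ζ ^ k * α)) * ∏ _k ∈ Finset.range d, v := by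
            rw [h1, ← hvd]
          _ = ∏ k ∈ Finset.range d, ((u / v - ζ ^ k * α) * v) := by
            rw [Finset.prod_mul_distrib]
          _ = ∏ k ∈ Finset.range d, (u - ζ ^ k * α * v) := by
            refine Finset.prod_congr rfl fun k _ => ?_
            field_simp
  have hsum : ψ + ∑ k ∈ Finset.range d, θ k = π * d / 2 := by
    have h2 : ∀ k ∈ Finset.range d, θ k = (π - 2 * ψ) / (2 * d) + (π / d) * k := by
      intro k _
      rw [hθ]
      field_simp
    rw [Finset.sum_congr rfl h2, Finset.sum_add_distrib, Finset.sum_const, ← Finset.mul_sum,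
      Finset.card_range]
    have hgauss : (∑ k ∈ Finset.range d, (k : ℝ)) = d * ((d : ℝ) - 1) / 2 := by
      obtain ⟨e, rfl⟩ : ∃ e, d = e + 1 := ⟨d - 1, by omega⟩
      have h := Finset.sum_range_id_mul_two (e + 1)
      have h2 : ((∑ k ∈ Finset.range (e + 1), k : ℕ) : ℝ) * 2 = ((e + 1) * e : ℕ) := by
        exact_mod_cast congrArg (Nat.cast : ℕ → ℝ) h
      push_cast at h2 ⊢
      linarith
    rw [hgauss]
    field_simp
    ring_nf
    simp only [mul_inv_cancel_right₀ hdR]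
    ring
  have hfacs : ∏ k ∈ Finset.range d, (u - ζ ^ k * α * v)
      = (2 * I) ^ d * Complex.exp (((∑ k ∈ Finset.range d, θ k : ℝ)) * I) *
        ∏ k ∈ Finset.range d, (↑(-Real.sin (θ k)) * x + ↑(Real.cos (θ k)) * y) := by
    have h3 : ∀ k ∈ Finset.range d, (u - ζ ^ k * α * v)
        = (2 * I * Complex.exp ((θ k : ℝ) * I)) *
          (↑(-Real.sin (θ k)) * x + ↑(Real.cos (θ k)) * y) := by
      intro k _
      rw [hζk k, hu, hv]
      exact fac (θ k) x y
    rw [Finset.prod_congr rfl h3, Finset.prod_mul_distrib, Finset.prod_mul_distrib,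
      Finset.prod_const, Finset.card_range, ← Complex.exp_sum]
    congr 2
    push_cast
    rw [Finset.sum_mul]
  have hAeq : A = ↑r * Complex.exp ((ψ : ℝ) * I) := (Complex.norm_mul_exp_arg_mul_I A).symm
  have hconjA : (starRingEnd ℂ) A = ↑r * Complex.exp (((-ψ : ℝ)) * I) := by
    rw [hAeq, map_mul]
    congr 1
    · simp
    · rw [← Complex.exp_conj]
      congr 1
      simp
  have hI : Complex.exp (((π * d / 2 : ℝ)) * I) = I ^ d := by
    have : ((π * d / 2 : ℝ) : ℂ) * I = (d : ℂ) * (((π / 2 : ℝ)) * I) := by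
      push_cast; ring
    rw [this, Complex.exp_nat_mul]
    congr 1
    simp [Complex.exp_mul_I]
  calc A * u ^ d + (starRingEnd ℂ) A * v ^ d
      = ↑r * Complex.exp ((ψ : ℝ) * I) * (u ^ d - α ^ d * v ^ d) := by
        have hee : Complex.exp ((ψ : ℝ) * I) * Complex.exp (((-2 * ψ : ℝ)) * I)
            = Complex.exp (((-ψ : ℝ)) * I) := by
          rw [← Complex.exp_add]; congr 1; push_cast; ring
        rw [hconjA, hAeq, ← hee, hαd]
        ring
    _ = ↑r * Complex.exp ((ψ : ℝ) * I) * ((2 * I) ^ d *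
          Complex.exp (((∑ k ∈ Finset.range d, θ k : ℝ)) * I) *
          ∏ k ∈ Finset.range d, (↑(-Real.sin (θ k)) * x + ↑(Real.cos (θ k)) * y)) := by
        rw [hprod, hfacs]
    _ = ↑((-2 : ℝ) ^ d * r) *
          ∏ k ∈ Finset.range d, (↑(-Real.sin (θ k)) * x + ↑(Real.cos (θ k)) * y) := by
        have hcomb : (↑r : ℂ) * Complex.exp ((ψ : ℝ) * I) * ((2 * I) ^ d *
            Complex.exp (((∑ k ∈ Finset.range d, θ k : ℝ)) * I)) = ↑((-2 : ℝ) ^ d * r) := by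
          have he : Complex.exp ((ψ : ℝ) * I) *
              Complex.exp (((∑ k ∈ Finset.range d, θ k : ℝ)) * I)
              = Complex.exp (((π * d / 2 : ℝ)) * I) := by
            rw [← Complex.exp_add]
            congr 1
            rw [← hsum]
            push_cast
            ring
          calc (↑r : ℂ) * Complex.exp ((ψ : ℝ) * I) * ((2 * I) ^ d *
              Complex.exp (((∑ k ∈ Finset.range d, θ k : ℝ)) * I))
              = ↑r * (2 * I) ^ d * (Complex.exp ((ψ : ℝ) * I) *
                Complex.exp (((∑ k ∈ Finset.range d, θ k : ℝ)) * I)) := by ring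
            _ = ↑r * (2 * I) ^ d * I ^ d := by rw [he, hI]
            _ = ↑r * (2 * (I ^ 2)) ^ d := by rw [mul_pow]; ring
            _ = ↑((-2 : ℝ) ^ d * r) := by rw [Complex.I_sq]; push_cast; ring
        rw [← hcomb]
        ring

lemma harm_pow (t : ℂ) (ht : t ^ 2 = -1) (n : ℕ) :
    pderiv 0 (pderiv 0 ((X 0 + C t * X 1 : MvPolynomial (Fin 2) ℂ) ^ n))
      + pderiv 1 (pderiv 1 ((X 0 + C t * X 1 : MvPolynomial (Fin 2) ℂ) ^ n)) = 0 := by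
  have h0 : pderiv (0 : Fin 2) (X 0 + C t * X 1 : MvPolynomial (Fin 2) ℂ) = 1 := by
    simp [pderiv_mul, pderiv_C]
  have h1 : pderiv (1 : Fin 2) (X 0 + C t * X 1 : MvPolynomial (Fin 2) ℂ) = C t := by
    simp [pderiv_mul, pderiv_C]
  have hC : (C t : MvPolynomial (Fin 2) ℂ) * C t = -1 := by
    rw [← C_mul, ← sq, ht]
    simp
  have hnat : (n : MvPolynomial (Fin 2) ℂ) = C (n : ℂ) := by simp
  have hnat2 : ((n - 1 : ℕ) : MvPolynomial (Fin 2) ℂ) = C ((n - 1 : ℕ) : ℂ) := by simp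
  rw [pderiv_pow, pderiv_pow, h0, h1, hnat]
  simp only [mul_one, pderiv_C_mul, pderiv_mul, pderiv_pow, h0, h1, pderiv_C, mul_zero,
    add_zero, zero_add, hnat2]
  linear_combination (C (n : ℂ) * C ((n - 1 : ℕ) : ℂ) *
    (X 0 + C t * X 1 : MvPolynomial (Fin 2) ℂ) ^ (n - 1 - 1)) * hC

/-- a nonzero harmonic binary `d`-form has only real roots: it is a product of
a nonzero real constant and `d` real linear forms. -/
theorem harmonic_has_only_real_roots
    (d : ℕ) (f : MvPolynomial (Fin 2) ℝ)
    (hf : f.IsHomogeneous d) (hf0 : f ≠ 0) (hharm : lap f = 0) :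
    ∃ (c : ℝ) (a b : Fin d → ℝ), c ≠ 0 ∧
      f = C c * ∏ i, (C (a i) * X 0 + C (b i) * X 1) := by
  rcases Nat.eq_zero_or_pos d with hd | hd
  · subst hd
    have hfc : f = C (coeff 0 f) := by
      ext m
      by_cases hm : m = 0
      · subst hm; simp
      · rw [hf.coeff_eq_zero (by rwa [Ne, Finsupp.degree_eq_zero_iff])]
        rw [coeff_C, if_neg (by simpa using Ne.symm hm)]
    refine ⟨coeff 0 f, Fin.elim0, Fin.elim0, ?_, ?_⟩
    · intro h; apply hf0; rw [hfc, h, map_zero]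
    · simpa using hfc
  · set α := coeff (Finsupp.single 0 d) f with hαdef
    set β := coeff (Finsupp.single 0 (d - 1) + Finsupp.single 1 1) f with hβdef
    by_cases hαβ : α = 0 ∧ β = 0
    · exact absurd (lemA d f hf hharm hαβ.1 hαβ.2) hf0
    have hdR : (d : ℝ) ≠ 0 := Nat.cast_ne_zero.mpr hd.ne'
    set A : ℂ := ⟨α / 2, -(β / (2 * d))⟩ with hAdef
    have hA0 : A ≠ 0 := by
      intro h
      apply hαβ
      have h1 : α / 2 = 0 := congrArg Complex.re h
      have h2 : -(β / (2 * d)) = 0 := congrArg Complex.im h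
      constructor
      · linarith
      · have h3 : β / (2 * d) = 0 := by linarith
        field_simp at h3
        simpa using h3
    set a : Fin d → ℝ :=
      fun i => -Real.sin ((π - 2 * Complex.arg A + 2 * π * (i : ℕ)) / (2 * d)) with ha
    set b : Fin d → ℝ :=
      fun i => Real.cos ((π - 2 * Complex.arg A + 2 * π * (i : ℕ)) / (2 * d)) with hb
    set c : ℝ := (-2) ^ d * ‖A‖ with hc
    set Q : MvPolynomial (Fin 2) ℝ := ∏ i : Fin d, (C (a i) * X 0 + C (b i) * X 1) with hQ
    set R : MvPolynomial (Fin 2) ℝ := C c * Q with hR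
    set H : MvPolynomial (Fin 2) ℂ := C A * (X 0 + C Complex.I * X 1) ^ d
        + C ((starRingEnd ℂ) A) * (X 0 - C Complex.I * X 1) ^ d with hH
    -- map R = H
    have hmapR : MvPolynomial.map (algebraMap ℝ ℂ) R = H := by
      apply MvPolynomial.funext
      intro x
      have hsc := scalar_key A d hd (x 0) (x 1)
      rw [hR, hQ, hH]
      simp only [map_mul, map_prod, map_add, map_sub, MvPolynomial.map_C, MvPolynomial.map_X,
        map_pow, eval_mul, eval_prod, eval_add, eval_sub, eval_C, eval_X, eval_pow,
        Complex.coe_algebraMap, ha, hb, hc]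
      rw [Fin.prod_univ_eq_prod_range
        (fun k : ℕ => ((-Real.sin ((π - 2 * Complex.arg A + 2 * π * k) / (2 * d)) : ℝ) : ℂ) * x 0
          + ((Real.cos ((π - 2 * Complex.arg A + 2 * π * k) / (2 * d)) : ℝ) : ℂ) * x 1) d]
      push_cast at hsc ⊢
      linear_combination -hsc
    -- H is harmonic
    have hHharm : pderiv 0 (pderiv 0 H) + pderiv 1 (pderiv 1 H) = 0 := by
      have e1 := harm_pow Complex.I Complex.I_sq d
      have e2 := harm_pow (-Complex.I) (by rw [neg_pow, Complex.I_sq]; ring) d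
      simp only [map_neg, neg_mul, ← sub_eq_add_neg] at e2
      have k1 : ∀ (B : ℂ) (P : MvPolynomial (Fin 2) ℂ),
          pderiv 0 (pderiv 0 (C B * P)) + pderiv 1 (pderiv 1 (C B * P))
            = C B * (pderiv 0 (pderiv 0 P) + pderiv 1 (pderiv 1 P)) := by
        intro B P
        rw [pderiv_C_mul, pderiv_C_mul, pderiv_C_mul, pderiv_C_mul, mul_add]
      have e3 := k1 A ((X 0 + C Complex.I * X 1) ^ d)
      have e4 := k1 ((starRingEnd ℂ) A) ((X 0 - C Complex.I * X 1) ^ d)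
      rw [hH]
      simp only [map_add]
      linear_combination e3 + e4 + C A * e1 + C ((starRingEnd ℂ) A) * e2
    -- R is harmonic
    have hlapR : lap R = 0 := by
      apply MvPolynomial.map_injective (algebraMap ℝ ℂ) (algebraMap ℝ ℂ).injective
      rw [map_zero]
      rw [show lap R = pderiv 0 (pderiv 0 R) + pderiv 1 (pderiv 1 R) from rfl]
      rw [map_add, ← pderiv_map, ← pderiv_map, ← pderiv_map, ← pderiv_map, hmapR, hHharm]
    -- homogeneity
    have hlin1 : (X 0 + C Complex.I * X 1 : MvPolynomial (Fin 2) ℂ).IsHomogeneous 1 := by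
      apply (isHomogeneous_X _ _).add
      simpa using ((isHomogeneous_C (Fin 2) Complex.I).mul (isHomogeneous_X _ _))
    have hlin2 : (X 0 - C Complex.I * X 1 : MvPolynomial (Fin 2) ℂ).IsHomogeneous 1 := by
      apply (isHomogeneous_X _ _).sub
      simpa using ((isHomogeneous_C (Fin 2) Complex.I).mul (isHomogeneous_X _ _))
    have hHhom : H.IsHomogeneous d := by
      rw [hH]
      apply IsHomogeneous.add
      · simpa using (isHomogeneous_C (Fin 2) A).mul (by simpa using hlin1.pow d)
      · simpa using (isHomogeneous_C (Fin 2) ((starRingEnd ℂ) A)).mul (by simpa using hlin2.pow d)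
    have hQhom : Q.IsHomogeneous d := by
      rw [hQ]
      have := IsHomogeneous.prod Finset.univ
        (fun i : Fin d => (C (a i) * X 0 + C (b i) * X 1 : MvPolynomial (Fin 2) ℝ)) (fun _ => 1)
        (fun i _ => by
          apply IsHomogeneous.add
          · simpa using (isHomogeneous_C (Fin 2) (a i)).mul (isHomogeneous_X _ _)
          · simpa using (isHomogeneous_C (Fin 2) (b i)).mul (isHomogeneous_X _ _))
      simpa using this
    have hRhom : R.IsHomogeneous d := by
      rw [hR]
      simpa using (isHomogeneous_C (Fin 2) c).mul hQhom
    -- coefficient matching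
    have hcoefftop : coeff (Finsupp.single 0 d) R = α := by
      have h1 : (algebraMap ℝ ℂ) (coeff (Finsupp.single 0 d) R)
          = coeff (Finsupp.single 0 d) H := by
        rw [← MvPolynomial.coeff_map, hmapR]
      have h2 : coeff (Finsupp.single 0 d) H = (α : ℂ) := by
        rw [← eval_one_zero d H hHhom, hH]
        simp only [eval_add, eval_mul, eval_pow, eval_sub, eval_C, eval_X,
          Matrix.cons_val_zero, Matrix.cons_val_one, Matrix.head_cons]
        rw [mul_zero, add_zero, sub_zero, one_pow, mul_one, mul_one, Complex.add_conj]
        have : A.re = α / 2 := rfl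
        rw [this]
        push_cast
        ring
      rw [h2, Complex.coe_algebraMap] at h1
      exact_mod_cast h1
    have hcoeffnext : coeff (Finsupp.single 0 (d - 1) + Finsupp.single 1 1) R = β := by
      have h1 : (algebraMap ℝ ℂ) (coeff (Finsupp.single 0 (d - 1) + Finsupp.single 1 1) R)
          = coeff (Finsupp.single 0 (d - 1) + Finsupp.single 1 1) H := by
        rw [← MvPolynomial.coeff_map, hmapR]
      have h2 : coeff (Finsupp.single 0 (d - 1) + Finsupp.single 1 1) H = (β : ℂ) := by
        have h3 := _root_.coeff_pderiv (1 : Fin 2) (Finsupp.single 0 (d - 1)) H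
        have h4 : ((Finsupp.single (0 : Fin 2) (d - 1)) 1 : ℕ) = 0 := by simp
        rw [h4] at h3
        rw [← eval_one_zero (d - 1) _ (isHomog_pderiv hHhom 1)] at h3
        rw [hH] at h3
        simp only [map_add, pderiv_C_mul, pderiv_pow, pderiv_mul, pderiv_X_self,
          pderiv_X_of_ne (show (0 : Fin 2) ≠ 1 by decide), pderiv_C, mul_zero, add_zero,
          zero_add, mul_one, map_sub, pderiv_X, eval_add, eval_mul, eval_pow, eval_sub,
          eval_C, eval_X, Matrix.cons_val_zero, Matrix.cons_val_one,
          Matrix.head_cons, Nat.cast_id, map_natCast, map_zero] at h3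
        -- h3 : A * (d * 1 * I) + conj A * (d * 1 * (-I)) = 1 * coeff ... (roughly)
        have him : A.im = -(β / (2 * d)) := rfl
        have hsub := Complex.sub_conj A
        rw [him] at hsub
        rw [Nat.cast_zero, zero_add, one_mul] at h3
        rw [← h3]
        simp only [zero_mul, zero_add, one_pow, mul_one, zero_sub, sub_zero]
        have hdC : (d : ℂ) ≠ 0 := Nat.cast_ne_zero.mpr hd.ne'
        have hsub2 : (d : ℂ) * (A - (starRingEnd ℂ) A) = -(β : ℂ) * Complex.I := by
          rw [hsub]
          push_cast
          field_simp
        linear_combination Complex.I * hsub2 + (-(β : ℂ)) * Complex.I_sq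
      rw [h2, Complex.coe_algebraMap] at h1
      exact_mod_cast h1
    -- conclude
    have hsub0 : f - R = 0 := by
      apply lemA d (f - R) (hf.sub hRhom)
      · rw [show lap (f - R) = lap f - lap R from by
          simp only [lap, map_sub]; ring]
        rw [hharm, hlapR, sub_zero]
      · rw [coeff_sub, ← hαdef, hcoefftop, sub_self]
      · rw [coeff_sub, ← hβdef, hcoeffnext, sub_self]
    refine ⟨c, a, b, ?_, ?_⟩
    · rw [hc]
      exact mul_ne_zero (pow_ne_zero _ (by norm_num)) (norm_ne_zero_iff.mpr hA0)
    · rw [sub_eq_zero.mp hsub0, hR, hQ]
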